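/- (Proposition 1, minimizer form.) Let X and Y be real N×d matrices. Suppose the N×N permutation matrix P* maximizes P ↦ ‖Xᵀ P Y‖_* over all N×N permutation matrices, and suppose Xᵀ P* Y = U Σ Vᵀ with U, V d×d orthogonal and Σ diagonal with nonnegative entries (a singular value decomposition). Then the pair (P*, U Vᵀ) minimizes ‖XW − PY‖_F² over all pairs of an N×N permutation matrix P and a d×d orthogonal matrix W; note Uᵀ(UVᵀ)V = I. -/

import Mathlib

open Matrix

/-- `P` is a permutation matrix: the matrix of some permutation of the index set. -/
def IsPermMatrix {N : ℕ} (P : Matrix (Fin N) (Fin N) ℝ) : Prop :=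
  ∃ σ : Equiv.Perm (Fin N), P = σ.permMatrix ℝ

/-- Squared Frobenius norm: `‖A‖_F² = Tr (Aᵀ A)`. -/
def frobSq {m n : ℕ} (A : Matrix (Fin m) (Fin n) ℝ) : ℝ := (Aᵀ * A).trace

/-- The PSD square root, as `Matrix.PosSemidef.sqrt` was defined in older Mathlib. -/
noncomputable def psdSqrt {n : ℕ} {M : Matrix (Fin n) (Fin n) ℝ} (hA : M.PosSemidef) :
    Matrix (Fin n) (Fin n) ℝ :=
  (hA.1.eigenvectorUnitary : Matrix (Fin n) (Fin n) ℝ) *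
    diagonal ((↑) ∘ (√·) ∘ hA.1.eigenvalues) *
    (star hA.1.eigenvectorUnitary : Matrix (Fin n) (Fin n) ℝ)

/-- Nuclear (trace) norm: `‖A‖_* = Tr √(AᵀA)`, where `√` is the PSD square root. -/
noncomputable def nuclearNorm {m n : ℕ} (A : Matrix (Fin m) (Fin n) ℝ) : ℝ :=
  (psdSqrt (Matrix.posSemidef_conjTranspose_mul_self A)).trace

open scoped MatrixOrder

lemma psdSqrt_eq {n : ℕ} {M : Matrix (Fin n) (Fin n) ℝ} (hA : M.PosSemidef) :
    psdSqrt hA = CFC.sqrt M := by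
  rw [CFC.sqrt_eq_cfc, cfc_nnreal_eq_real _ M, hA.1.cfc_eq]
  simp only [IsHermitian.cfc, psdSqrt, Unitary.conjStarAlgAut_apply]
  congr 3
  funext i
  simp [Real.coe_sqrt, Real.coe_toNNReal', max_eq_left (hA.eigenvalues_nonneg i)]


lemma conjT_real {m n : ℕ} (A : Matrix (Fin m) (Fin n) ℝ) : Aᴴ = Aᵀ := by
  ext i j; simp [conjTranspose_apply]

lemma trace_le_of_sq {d : ℕ} (S M W : Matrix (Fin d) (Fin d) ℝ)
    (hS : S.PosSemidef) (hW : Wᵀ * W = 1) (hM : Mᵀ * M = S * S) :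
    (Wᵀ * M).trace ≤ S.trace := by
  classical
  set Q : Matrix (Fin d) (Fin d) ℝ := (hS.1.eigenvectorUnitary : Matrix (Fin d) (Fin d) ℝ) with hQdef
  set g : Fin d → ℝ := hS.1.eigenvalues with hgdef
  have hQ1 : Qᵀ * Q = 1 := by
    have := (Matrix.mem_unitaryGroup_iff'.mp (hS.1.eigenvectorUnitary).2)
    rwa [star_eq_conjTranspose, conjT_real] at this
  have hQ2 : Q * Qᵀ = 1 := mul_eq_one_comm.mp hQ1
  have hspec : S = Q * diagonal g * Qᵀ := by
    have := hS.1.spectral_theorem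
    rwa [Unitary.conjStarAlgAut_apply, star_eq_conjTranspose, conjT_real, show (RCLike.ofReal ∘ g : Fin d → ℝ) = g from rfl] at this
  have hgnn : ∀ i, 0 ≤ g i := fun i => hS.eigenvalues_nonneg i
  -- trace S = ∑ g
  have htrS : S.trace = ∑ i, g i := by
    rw [hspec, trace_mul_cycle, hQ1, one_mul, trace_diagonal]
  -- reduce trace (Wᵀ M) to conjugated trace
  have hconj : (Wᵀ * M).trace = (Qᵀ * (Wᵀ * M) * Q).trace := by
    rw [trace_mul_cycle, ← mul_assoc, hQ2, one_mul]
  -- column norms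
  have hWQ : (W * Q)ᵀ * (W * Q) = 1 := by
    rw [transpose_mul, mul_assoc, ← mul_assoc Wᵀ, hW, one_mul, hQ1]
  have key : ∀ x : Matrix (Fin d) (Fin d) ℝ, Qᵀ * (Q * x) = x := fun x => by
    rw [← Matrix.mul_assoc, hQ1, Matrix.one_mul]
  have hMQ : (M * Q)ᵀ * (M * Q) = diagonal (fun i => g i ^ 2) := by
    rw [transpose_mul, Matrix.mul_assoc, ← Matrix.mul_assoc Mᵀ M Q, hM, hspec]
    simp only [Matrix.mul_assoc]
    rw [key, key, hQ1, Matrix.mul_one, diagonal_mul_diagonal]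
    ext i; ring_nf
  rw [hconj, htrS]
  have hrw : Qᵀ * (Wᵀ * M) * Q = (W * Q)ᵀ * (M * Q) := by
    simp only [transpose_mul, Matrix.mul_assoc]
  rw [hrw, trace]
  apply Finset.sum_le_sum
  intro i _
  have hcol : ((W * Q)ᵀ * (M * Q)).diag i = ∑ k, (W * Q) k i * (M * Q) k i := by
    simp only [diag, Matrix.mul_apply, transpose_apply]
  rw [hcol]
  have h1 : ∑ k, (W * Q) k i ^ 2 = 1 := by
    have := congrArg (fun A => A i i) hWQ
    simpa [Matrix.mul_apply, transpose_apply, pow_two, one_apply, mul_comm] using this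
  have h2 : ∑ k, (M * Q) k i ^ 2 = g i ^ 2 := by
    have := congrArg (fun A => A i i) hMQ
    simpa [Matrix.mul_apply, transpose_apply, pow_two, mul_comm] using this
  have hcs := Finset.sum_mul_sq_le_sq_mul_sq Finset.univ (fun k => (W * Q) k i)
    (fun k => (M * Q) k i)
  rw [h1, h2, one_mul] at hcs
  calc ∑ k, (W * Q) k i * (M * Q) k i
      ≤ |∑ k, (W * Q) k i * (M * Q) k i| := le_abs_self _
    _ = Real.sqrt ((∑ k, (W * Q) k i * (M * Q) k i) ^ 2) := (Real.sqrt_sq_eq_abs _).symm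
    _ ≤ Real.sqrt (g i ^ 2) := Real.sqrt_le_sqrt hcs
    _ = g i := by rw [Real.sqrt_sq (hgnn i)]


lemma trace_le_nuclear {d : ℕ} (M W : Matrix (Fin d) (Fin d) ℝ) (hW : Wᵀ * W = 1) :
    (Wᵀ * M).trace ≤ nuclearNorm M := by
  have hPSD := Matrix.posSemidef_conjTranspose_mul_self M
  refine trace_le_of_sq (psdSqrt hPSD) M W (by
    rw [psdSqrt_eq]; exact (CFC.sqrt_nonneg (A := Matrix (Fin d) (Fin d) ℝ) _).posSemidef) hW ?_
  rw [psdSqrt_eq, CFC.sqrt_mul_sqrt_self _ hPSD.nonneg, ← conjT_real]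

lemma perm_orth {N : ℕ} {P : Matrix (Fin N) (Fin N) ℝ} (hP : IsPermMatrix P) :
    Pᵀ * P = 1 := by
  obtain ⟨σ, rfl⟩ := hP
  rw [show (σ.permMatrix ℝ)ᵀ = (σ⁻¹).permMatrix ℝ by
    rw [Equiv.Perm.permMatrix, Equiv.Perm.permMatrix, ← PEquiv.toMatrix_symm,
      ← Equiv.toPEquiv_symm]; rfl]
  rw [Equiv.Perm.permMatrix, Equiv.Perm.permMatrix, ← PEquiv.toMatrix_trans,
    ← Equiv.toPEquiv_trans,
    show Equiv.trans σ⁻¹ σ = Equiv.refl _ from Equiv.symm_trans_self σ,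
    Equiv.toPEquiv_refl, PEquiv.toMatrix_refl]

lemma frob_expand {N d : ℕ} (X Y : Matrix (Fin N) (Fin d) ℝ)
    (P : Matrix (Fin N) (Fin N) ℝ) (W : Matrix (Fin d) (Fin d) ℝ)
    (hP : Pᵀ * P = 1) (hW : Wᵀ * W = 1) :
    frobSq (X * W - P * Y) =
      (Xᵀ * X).trace + (Yᵀ * Y).trace - 2 * (Wᵀ * (Xᵀ * P * Y)).trace := by
  have hWW : W * Wᵀ = 1 := mul_eq_one_comm.mp hW
  unfold frobSq
  rw [transpose_sub, Matrix.sub_mul, Matrix.mul_sub, Matrix.mul_sub, trace_sub, trace_sub, trace_sub]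
  have h1 : ((X * W)ᵀ * (X * W)).trace = (Xᵀ * X).trace := by
    rw [transpose_mul, Matrix.mul_assoc, trace_mul_comm,
      ← Matrix.mul_assoc Xᵀ X W, Matrix.mul_assoc (Xᵀ * X) W Wᵀ, hWW, Matrix.mul_one]
  have h2 : ((P * Y)ᵀ * (P * Y)).trace = (Yᵀ * Y).trace := by
    rw [transpose_mul, Matrix.mul_assoc, ← Matrix.mul_assoc Pᵀ P Y, hP, Matrix.one_mul]
  have h3 : ((X * W)ᵀ * (P * Y)).trace = (Wᵀ * (Xᵀ * P * Y)).trace := by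
    rw [transpose_mul]
    simp only [Matrix.mul_assoc]
  have h4 : ((P * Y)ᵀ * (X * W)).trace = (Wᵀ * (Xᵀ * P * Y)).trace := by
    rw [← h3, ← trace_transpose, transpose_mul, transpose_transpose]
  rw [h1, h2, h3, h4]; ring

lemma nuclear_svd {d : ℕ} (U V D : Matrix (Fin d) (Fin d) ℝ)
    (hU : Uᵀ * U = 1) (hV : Vᵀ * V = 1) (hD : D.IsDiag) (hDnn : ∀ i, 0 ≤ D i i) :
    nuclearNorm (U * D * Vᵀ) = D.trace := by
  have hDdiag : diagonal D.diag = D := hD.diagonal_diag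
  have hDsym : Dᵀ = D := by rw [← hDdiag, diagonal_transpose]
  have hDpsd : D.PosSemidef := by
    rw [← hDdiag]; exact posSemidef_diagonal_iff.mpr fun i => hDnn i
  have hBpsd : (V * D * Vᵀ).PosSemidef := by
    have := hDpsd.mul_mul_conjTranspose_same V
    rwa [conjT_real] at this
  have hPSD := Matrix.posSemidef_conjTranspose_mul_self (U * D * Vᵀ)
  have keyU : ∀ x : Matrix (Fin d) (Fin d) ℝ, Uᵀ * (U * x) = x := fun x => by
    rw [← Matrix.mul_assoc, hU, Matrix.one_mul]
  have keyV : ∀ x : Matrix (Fin d) (Fin d) ℝ, Vᵀ * (V * x) = x := fun x => by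
    rw [← Matrix.mul_assoc, hV, Matrix.one_mul]
  have hsq : (V * D * Vᵀ) ^ 2 = (U * D * Vᵀ)ᴴ * (U * D * Vᵀ) := by
    rw [conjT_real, pow_two, transpose_mul, transpose_mul, transpose_transpose, hDsym]
    simp only [Matrix.mul_assoc]
    rw [keyV, keyU]
  have hsqrt : V * D * Vᵀ = psdSqrt hPSD := by
    rw [psdSqrt_eq]; exact (CFC.sqrt_unique (by rw [← hsq, pow_two]) hBpsd.nonneg).symm
  show (psdSqrt hPSD).trace = D.trace
  rw [← hsqrt, trace_mul_cycle, hV, Matrix.one_mul]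


/-- Proposition 1, minimizer form: if the permutation matrix `P*` maximizes
`P ↦ ‖Xᵀ P Y‖_*` and `Xᵀ P* Y = U D Vᵀ` is an SVD, then `(P*, U Vᵀ)` minimizes
`‖XW − PY‖_F²` over pairs of a permutation matrix and an orthogonal matrix;
note `Uᵀ (U Vᵀ) V = 1`. -/
theorem stmt6 {N d : ℕ} (X Y : Matrix (Fin N) (Fin d) ℝ)
    (Pstar : Matrix (Fin N) (Fin N) ℝ) (U V D : Matrix (Fin d) (Fin d) ℝ)
    (hPstar : IsPermMatrix Pstar)
    (hmax : ∀ P : Matrix (Fin N) (Fin N) ℝ, IsPermMatrix P →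
      nuclearNorm (Xᵀ * P * Y) ≤ nuclearNorm (Xᵀ * Pstar * Y))
    (hU : Uᵀ * U = 1) (hV : Vᵀ * V = 1) (hD : D.IsDiag) (hDnn : ∀ i, 0 ≤ D i i)
    (hSVD : Xᵀ * Pstar * Y = U * D * Vᵀ) :
    (∀ (P : Matrix (Fin N) (Fin N) ℝ) (W : Matrix (Fin d) (Fin d) ℝ),
        IsPermMatrix P → Wᵀ * W = 1 →
        frobSq (X * (U * Vᵀ) - Pstar * Y) ≤ frobSq (X * W - P * Y)) ∧
    Uᵀ * (U * Vᵀ) * V = 1 := by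
  have hVV : V * Vᵀ = 1 := mul_eq_one_comm.mp hV
  have hW0 : (U * Vᵀ)ᵀ * (U * Vᵀ) = 1 := by
    rw [transpose_mul, transpose_transpose]
    rw [Matrix.mul_assoc, ← Matrix.mul_assoc Uᵀ U Vᵀ, hU, Matrix.one_mul, hVV]
  constructor
  · intro P W hP hW
    rw [frob_expand X Y Pstar (U * Vᵀ) (perm_orth hPstar) hW0,
      frob_expand X Y P W (perm_orth hP) hW]
    have e1 : ((U * Vᵀ)ᵀ * (Xᵀ * Pstar * Y)).trace = D.trace := by
      rw [hSVD, transpose_mul, transpose_transpose]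
      have : V * Uᵀ * (U * D * Vᵀ) = V * D * Vᵀ := by
        simp only [Matrix.mul_assoc]
        rw [show Uᵀ * (U * (D * Vᵀ)) = D * Vᵀ by
          rw [← Matrix.mul_assoc, hU, Matrix.one_mul]]
      rw [this, trace_mul_cycle, hV, Matrix.one_mul]
    have e2 : nuclearNorm (Xᵀ * Pstar * Y) = D.trace := by
      rw [hSVD]; exact nuclear_svd U V D hU hV hD hDnn
    have chain : (Wᵀ * (Xᵀ * P * Y)).trace ≤ ((U * Vᵀ)ᵀ * (Xᵀ * Pstar * Y)).trace := by
      calc (Wᵀ * (Xᵀ * P * Y)).trace ≤ nuclearNorm (Xᵀ * P * Y) :=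
            trace_le_nuclear _ W hW
        _ ≤ nuclearNorm (Xᵀ * Pstar * Y) := hmax P hP
        _ = D.trace := e2
        _ = ((U * Vᵀ)ᵀ * (Xᵀ * Pstar * Y)).trace := e1.symm
    linarith
  · rw [Matrix.mul_assoc, Matrix.mul_assoc, hV, Matrix.mul_one, hU]
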